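/- Let Υ be a set equipped with a σ-algebra, let C ≥ 1, and let ρ : Υ → Υ → ℝ be a separable C-inframetric on Υ that is jointly measurable (as a function on Υ × Υ with the product σ-algebra). Let X₀, X₁, X₂, … be an i.i.d. sequence of Υ-valued random variables on a probability space (Ω, P), regard X₀ as the query, and let (kₙ) be a sequence of positive integers with kₙ/n → 0 as n → ∞. Then for every a > 0, P( card{i ∈ {1,…,n} : ρ(Xᵢ, X₀) < a} < kₙ ) → 0 as n → ∞. (Equivalently, the probability that the kₙ-th nearest sample point to X₀ in the ρ-distance lies at ρ-distance at least a from X₀ tends to zero.) -/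

import Mathlib

open MeasureTheory ProbabilityTheory Filter

lemma card_univ_filter_eq {α : Type*} (s : Finset α) (p : α → Prop) [DecidablePred p] :
    ((Finset.univ : Finset {x // x ∈ s}).filter fun i => p i.1).card = (s.filter p).card := by
  rw [Finset.univ_eq_attach, Finset.filter_attach]
  simp

lemma card_filter_range_succ (n : ℕ) (p : ℕ → Prop) [DecidablePred p] :
    ((Finset.range n).filter fun i => p (i + 1)).card = ((Finset.Icc 1 n).filter p).card := by
  apply Finset.card_bij (fun i _ => i + 1)
  · intro b hb
    simp only [Finset.mem_filter, Finset.mem_range] at hb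
    simp only [Finset.mem_filter, Finset.mem_Icc]
    exact ⟨by omega, hb.2⟩
  · intro b hb c hc h; omega
  · intro b hb
    simp only [Finset.mem_filter, Finset.mem_Icc] at hb
    refine ⟨b - 1, ?_, by omega⟩
    simp only [Finset.mem_filter, Finset.mem_range]
    constructor
    · omega
    · have : b - 1 + 1 = b := by omega
      rw [this]; exact hb.2

open Classical in
/-- For an i.i.d. sample in a separable inframetric space, if `kₙ/n → 0` then the
probability that fewer than `kₙ` sample points lie within `ρ`-distance `a` of the
query `X₀` tends to zero: the `kₙ`-th nearest neighbour eventually lies within any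
fixed distance `a` of the query. -/
theorem knn_distance_tendsto_zero
    {Υ : Type*} [MeasurableSpace Υ]
    (C : ℝ) (hC : 1 ≤ C)
    (ρ : Υ → Υ → ℝ)
    (hnonneg : ∀ x y, 0 ≤ ρ x y)
    (heq : ∀ x y, ρ x y = 0 ↔ x = y)
    (hsymm : ∀ x y, ρ x y = ρ y x)
    (hinfra : ∀ x y z, ρ x z ≤ C * max (ρ x y) (ρ y z))
    (hsep : ∃ T : Set Υ, T.Countable ∧ ∀ x : Υ, ∀ ε > 0, ∃ t ∈ T, ρ x t < ε)
    (hρmeas : Measurable (fun p : Υ × Υ => ρ p.1 p.2))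
    {Ω : Type*} [MeasurableSpace Ω] (P : Measure Ω) [IsProbabilityMeasure P]
    (X : ℕ → Ω → Υ)
    (hXmeas : ∀ i, Measurable (X i))
    (hident : ∀ i, Measure.map (X i) P = Measure.map (X 0) P)
    (hindep : iIndepFun X P)
    (k : ℕ → ℕ) (hkpos : ∀ n, 0 < k n)
    (hkn : Tendsto (fun n => (k n : ℝ) / (n : ℝ)) atTop (nhds 0))
    (a : ℝ) (ha : 0 < a) :
    Tendsto (fun n => P {ω : Ω |
        ((Finset.Icc 1 n).filter (fun i => ρ (X i ω) (X 0 ω) < a)).card < k n})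
      atTop (nhds 0) := by
  classical
  set μ : Measure Υ := Measure.map (X 0) P with hμdef
  have hμprob : IsProbabilityMeasure μ := Measure.isProbabilityMeasure_map (hXmeas 0).aemeasurable
  have hC0 : (0:ℝ) < C := lt_of_lt_of_le one_pos hC
  -- measurability of balls
  have hballmeas : ∀ (x : Υ) (r : ℝ), MeasurableSet {y : Υ | ρ y x < r} := by
    intro x r
    exact measurableSet_lt (hρmeas.comp (measurable_id.prodMk measurable_const))
      measurable_const
  -- Step C: a.e. positive ball mass
  have hpos : ∀ᵐ x ∂μ, 0 < μ {y | ρ y x < a} := by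
    obtain ⟨T, hTc, hTd⟩ := hsep
    have haC : 0 < a / C := div_pos ha hC0
    set T0 : Set Υ := {t | t ∈ T ∧ μ {y | ρ y t < a / C} = 0} with hT0
    have hsub : {x : Υ | ¬ 0 < μ {y | ρ y x < a}} ⊆ ⋃ t ∈ T0, {y | ρ y t < a / C} := by
      intro x hx
      simp only [Set.mem_setOf_eq, not_lt, le_zero_iff] at hx
      obtain ⟨t, htT, htx⟩ := hTd x (a / C) haC
      have hsubset : {y | ρ y t < a / C} ⊆ {y | ρ y x < a} := by
        intro y hy
        have hmax : max (ρ y t) (ρ t x) < a / C :=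
          max_lt hy (by rw [hsymm]; exact htx)
        calc ρ y x ≤ C * max (ρ y t) (ρ t x) := hinfra y t x
          _ < C * (a / C) := (mul_lt_mul_iff_right₀ hC0).2 hmax
          _ = a := by field_simp
      have ht0 : μ {y | ρ y t < a / C} = 0 := measure_mono_null hsubset hx
      exact Set.mem_biUnion ⟨htT, ht0⟩ htx
    have hnull : μ (⋃ t ∈ T0, {y | ρ y t < a / C}) = 0 := by
      rw [measure_biUnion_null_iff (hTc.mono fun t ht => ht.1)]
      exact fun t ht => ht.2
    rw [ae_iff]
    exact measure_mono_null hsub hnull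
  -- the product-space sets
  let S : (n : ℕ) → Set (Υ × ({i // i ∈ Finset.Icc 1 n} → Υ)) := fun n =>
    {q | ((Finset.univ.filter fun i : {i // i ∈ Finset.Icc 1 n} => ρ (q.2 i) q.1 < a)).card < k n}
  have hSmeas : ∀ n, MeasurableSet (S n) := by
    intro n
    have hcard : Measurable fun q : Υ × ({i // i ∈ Finset.Icc 1 n} → Υ) =>
        ((Finset.univ.filter fun i : {i // i ∈ Finset.Icc 1 n} => ρ (q.2 i) q.1 < a)).card := by
      simp_rw [Finset.card_filter]
      apply Finset.measurable_sum
      intro i _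
      have hm : Measurable fun q : Υ × ({i // i ∈ Finset.Icc 1 n} → Υ) => (q.2 i, q.1) :=
        ((measurable_pi_apply i).comp measurable_snd).prodMk measurable_fst
      have hm2 : Measurable fun q : Υ × ({i // i ∈ Finset.Icc 1 n} → Υ) => ρ (q.2 i) q.1 :=
        hρmeas.comp hm
      exact Measurable.ite (measurableSet_lt hm2 measurable_const)
        measurable_const measurable_const
    exact measurableSet_lt hcard measurable_const
  -- tuple maps
  have hBmeas : ∀ n, Measurable fun ω (i : {i // i ∈ Finset.Icc 1 n}) => X i ω :=
    fun n => measurable_pi_lambda _ fun i => hXmeas i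
  -- key identity
  have hkey : ∀ n, P {ω : Ω |
      ((Finset.Icc 1 n).filter (fun i => ρ (X i ω) (X 0 ω) < a)).card < k n} =
      ∫⁻ x, (P.map fun ω (i : {i // i ∈ Finset.Icc 1 n}) => X i ω) (Prod.mk x ⁻¹' S n) ∂μ := by
    intro n
    have hprob : IsProbabilityMeasure (P.map fun ω (i : {i // i ∈ Finset.Icc 1 n}) => X i ω) :=
      Measure.isProbabilityMeasure_map (hBmeas n).aemeasurable
    have hindep2 : IndepFun (X 0) (fun ω (i : {i // i ∈ Finset.Icc 1 n}) => X i ω) P := by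
      have h := hindep.indepFun_finset {0} (Finset.Icc 1 n) (by simp) hXmeas
      exact h.comp (measurable_pi_apply (⟨0, Finset.mem_singleton_self 0⟩ :
        {i // i ∈ ({0} : Finset ℕ)})) measurable_id
    have hmap : P.map (fun ω => (X 0 ω, fun i : {i // i ∈ Finset.Icc 1 n} => X i ω)) =
        μ.prod (P.map fun ω (i : {i // i ∈ Finset.Icc 1 n}) => X i ω) :=
      (indepFun_iff_map_prod_eq_prod_map_map (hXmeas 0).aemeasurable
        (hBmeas n).aemeasurable).1 hindep2
    have hset : {ω : Ω | ((Finset.Icc 1 n).filter (fun i => ρ (X i ω) (X 0 ω) < a)).card < k n}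
        = (fun ω => (X 0 ω, fun i : {i // i ∈ Finset.Icc 1 n} => X i ω)) ⁻¹' S n := by
      ext ω
      simp only [Set.mem_setOf_eq, Set.mem_preimage, S]
      rw [card_univ_filter_eq (Finset.Icc 1 n) (fun i => ρ (X i ω) (X 0 ω) < a)]
    rw [hset, ← Measure.map_apply ((hXmeas 0).prodMk (hBmeas n)) (hSmeas n), hmap,
      Measure.prod_apply (hSmeas n)]
  -- convergence for good x
  have hconv : ∀ x : Υ, 0 < μ {y | ρ y x < a} →
      Tendsto (fun n => (P.map fun ω (i : {i // i ∈ Finset.Icc 1 n}) => X i ω)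
        (Prod.mk x ⁻¹' S n)) atTop (nhds 0) := by
    intro x hx
    set B : Set Υ := {y | ρ y x < a} with hBdef
    have hBm : MeasurableSet B := hballmeas x a
    set Z : ℕ → Ω → ℝ := fun i ω => B.indicator (fun _ => (1:ℝ)) (X (i+1) ω) with hZdef
    have hgmeas : Measurable (B.indicator (fun _ => (1:ℝ))) := measurable_const.indicator hBm
    have hZeq : ∀ i, Z i = (X (i+1) ⁻¹' B).indicator fun _ => (1:ℝ) := by
      intro i; ext ω; simp [Z, Set.indicator_apply]
    have hZint : Integrable (Z 0) P := by
      rw [hZeq 0]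
      exact (integrable_const (1:ℝ)).indicator (hXmeas 1 hBm)
    have hZindep : Pairwise (Function.onFun (IndepFun · · P) Z) := by
      intro i j hij
      exact (hindep.indepFun (show i+1 ≠ j+1 by omega)).comp hgmeas hgmeas
    have hZident : ∀ i, IdentDistrib (Z i) (Z 0) P P := by
      intro i
      have h1 : IdentDistrib (X (i+1)) (X 1) P P :=
        ⟨(hXmeas _).aemeasurable, (hXmeas 1).aemeasurable, by rw [hident, hident]⟩
      exact h1.comp hgmeas
    have hmean : P[Z 0] = (μ B).toReal := by
      rw [hZeq 0, show (0:ℕ)+1 = 1 from rfl,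
        integral_indicator_const (1:ℝ) (hXmeas 1 hBm), smul_eq_mul, mul_one,
        measureReal_def, ← Measure.map_apply (hXmeas 1) hBm, hident 1]
    have hp : 0 < (μ B).toReal := ENNReal.toReal_pos hx.ne' (measure_ne_top μ B)
    have hslln := strong_law_ae Z hZint hZindep hZident
    have hev : ∀ᵐ ω ∂P, ∀ᶠ n in atTop, ¬ (((Finset.Icc 1 n).filter
        fun i => ρ (X i ω) x < a).card < k n) := by
      filter_upwards [hslln] with ω hω
      have hlt := hkn.eventually_lt hω (by rw [hmean]; exact hp)
      filter_upwards [hlt, eventually_ge_atTop 1] with n hn hn1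
      have hnpos : (0:ℝ) < n := by exact_mod_cast hn1
      have hsum : ∑ i ∈ Finset.range n, Z i ω
          = (((Finset.Icc 1 n).filter fun i => ρ (X i ω) x < a).card : ℝ) := by
        have hzi : ∀ i, Z i ω = if ρ (X (i+1) ω) x < a then (1:ℝ) else 0 := by
          intro i; simp [Z, Set.indicator_apply, B, Set.mem_setOf_eq]
        simp_rw [hzi]
        rw [Finset.sum_boole]
        norm_cast
        exact card_filter_range_succ n (fun i => ρ (X i ω) x < a)
      intro hcon
      have hcard : (((Finset.Icc 1 n).filter fun i => ρ (X i ω) x < a).card : ℝ) < k n := by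
        exact_mod_cast hcon
      rw [smul_eq_mul, hsum, inv_mul_eq_div] at hn
      have := (div_lt_div_iff_of_pos_right hnpos).1 hn
      linarith
    have hAs_mble : ∀ n, MeasurableSet {ω | ((Finset.Icc 1 n).filter
        fun i => ρ (X i ω) x < a).card < k n} := by
      intro n
      have heqset : {ω | ((Finset.Icc 1 n).filter fun i => ρ (X i ω) x < a).card < k n}
          = (fun ω (i : {i // i ∈ Finset.Icc 1 n}) => X i ω) ⁻¹' (Prod.mk x ⁻¹' S n) := by
        ext ω
        simp only [Set.mem_setOf_eq, Set.mem_preimage, S]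
        rw [card_univ_filter_eq (Finset.Icc 1 n) (fun i => ρ (X i ω) x < a)]
      rw [heqset]
      exact (hBmeas n) (measurable_prodMk_left (hSmeas n))
    have hrw : ∀ n, (P.map fun ω (i : {i // i ∈ Finset.Icc 1 n}) => X i ω)
        (Prod.mk x ⁻¹' S n)
        = P {ω | ((Finset.Icc 1 n).filter fun i => ρ (X i ω) x < a).card < k n} := by
      intro n
      rw [Measure.map_apply (hBmeas n) (measurable_prodMk_left (hSmeas n))]
      congr 1
      ext ω
      simp only [Set.mem_preimage, Set.mem_setOf_eq, S]
      rw [card_univ_filter_eq (Finset.Icc 1 n) (fun i => ρ (X i ω) x < a)]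
    simp_rw [hrw]
    have hT := tendsto_measure_of_ae_tendsto_indicator_of_isFiniteMeasure (μ := P) atTop
      MeasurableSet.empty hAs_mble ?_
    · simpa using hT
    · filter_upwards [hev] with ω hω
      filter_upwards [hω] with n hn
      simp only [Set.mem_setOf_eq, Set.mem_empty_iff_false, iff_false]
      exact hn
  -- assemble via dominated convergence
  have hFmeas : ∀ n, Measurable fun x =>
      (P.map fun ω (i : {i // i ∈ Finset.Icc 1 n}) => X i ω) (Prod.mk x ⁻¹' S n) := by
    intro n
    haveI : IsProbabilityMeasure (P.map fun ω (i : {i // i ∈ Finset.Icc 1 n}) => X i ω) :=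
      Measure.isProbabilityMeasure_map (hBmeas n).aemeasurable
    exact measurable_measure_prodMk_left (hSmeas n)
  have hDCT := tendsto_lintegral_of_dominated_convergence (μ := μ)
    (F := fun n x => (P.map fun ω (i : {i // i ∈ Finset.Icc 1 n}) => X i ω) (Prod.mk x ⁻¹' S n))
    (f := fun _ => 0) (bound := fun _ => 1) hFmeas
    (fun n => Filter.Eventually.of_forall fun x => by
      have : IsProbabilityMeasure (P.map fun ω (i : {i // i ∈ Finset.Icc 1 n}) => X i ω) :=
        Measure.isProbabilityMeasure_map (hBmeas n).aemeasurable
      exact prob_le_one)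
    (by simp)
    (by filter_upwards [hpos] with x hx using hconv x hx)
  simp only [lintegral_zero] at hDCT
  have : (fun n => P {ω : Ω |
      ((Finset.Icc 1 n).filter (fun i => ρ (X i ω) (X 0 ω) < a)).card < k n}) =
      fun n => ∫⁻ x, (P.map fun ω (i : {i // i ∈ Finset.Icc 1 n}) => X i ω)
        (Prod.mk x ⁻¹' S n) ∂μ := funext hkey
  rw [this]
  exact hDCT
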